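/- Let A be a positive-definite n×n real matrix and q ∈ ℝⁿ with q ≥ 0, q ≠ 0. If v⋆ minimizes v ↦ ⟨v, A⁻¹ v⟩ over {v : v ≥ q} and w⋆ := A⁻¹ v⋆, then ⟨w⋆, q⟩² / ⟨w⋆, A w⋆⟩ = ⟨v⋆, A⁻¹ v⋆⟩, i.e., w⋆ attains the supremum of w ↦ ⟨w,q⟩²/⟨w,Aw⟩ over nonzero nonnegative w. -/

import Mathlib

open Matrix

/-- First-order condition helper: if `0 ≤ 2*b*t + c*t^2` for all small positive `t`,
then `0 ≤ b`. -/
lemma aux_first_order {b c : ℝ} (h : ∀ t : ℝ, 0 < t → t ≤ 1 → 0 ≤ 2 * b * t + c * t ^ 2) :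
    0 ≤ b := by
  by_contra hb
  push_neg at hb
  rcases le_or_gt c 0 with hc | hc
  · have := h 1 one_pos le_rfl
    nlinarith
  · set t := min 1 (-b / c) with ht
    have htpos : 0 < t := lt_min one_pos (div_pos (by linarith) hc)
    have ht1 : t ≤ 1 := min_le_left _ _
    have htc : t ≤ -b / c := min_le_right _ _
    have := h t htpos ht1
    have hct : t * c ≤ -b := (le_div_iff₀ hc).mp htc
    nlinarith

/-- Symmetry of the bilinear form of a real Hermitian matrix. -/
lemma aux_symm {n : ℕ} {B : Matrix (Fin n) (Fin n) ℝ} (hB : B.IsHermitian)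
    (x y : Fin n → ℝ) : x ⬝ᵥ B.mulVec y = y ⬝ᵥ B.mulVec x := by
  have hBt : Bᵀ = B := by
    have := hB
    rwa [Matrix.IsHermitian, Matrix.conjTranspose_eq_transpose_of_trivial] at this
  rw [Matrix.dotProduct_mulVec, ← Matrix.mulVec_transpose, hBt, dotProduct_comm]

/-- Cauchy–Schwarz for the bilinear form of a real positive semidefinite matrix. -/
lemma aux_cs {n : ℕ} {B : Matrix (Fin n) (Fin n) ℝ} (hB : B.PosSemidef)
    (x y : Fin n → ℝ) :
    (x ⬝ᵥ B.mulVec y) ^ 2 ≤ (x ⬝ᵥ B.mulVec x) * (y ⬝ᵥ B.mulVec y) := by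
  have key : ∀ t : ℝ, 0 ≤ (y ⬝ᵥ B.mulVec y) * (t * t) + (2 * (x ⬝ᵥ B.mulVec y)) * t
      + x ⬝ᵥ B.mulVec x := by
    intro t
    have h0 : 0 ≤ (x + t • y) ⬝ᵥ B.mulVec (x + t • y) := by
      have := hB.dotProduct_mulVec_nonneg (x + t • y)
      simpa using this
    have hsym := aux_symm hB.1 y x
    calc (0:ℝ) ≤ (x + t • y) ⬝ᵥ B.mulVec (x + t • y) := h0
      _ = (y ⬝ᵥ B.mulVec y) * (t * t) + (2 * (x ⬝ᵥ B.mulVec y)) * t + x ⬝ᵥ B.mulVec x := by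
          simp only [Matrix.mulVec_add, Matrix.mulVec_smul, dotProduct_add,
            add_dotProduct, dotProduct_smul, smul_dotProduct,
            smul_eq_mul, hsym]
          ring
  have hd := discrim_le_zero key
  rw [discrim] at hd
  nlinarith [hd]

theorem saddle_point_sup_attained (n : ℕ) (A : Matrix (Fin n) (Fin n) ℝ)
    (hA : A.PosDef) (q : Fin n → ℝ) (hq : 0 ≤ q) (hq0 : q ≠ 0)
    (vstar : Fin n → ℝ) (hvs : q ≤ vstar)
    (hmin : IsMinOn (fun v : Fin n → ℝ => v ⬝ᵥ A⁻¹.mulVec v) {v | q ≤ v} vstar)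
    (wstar : Fin n → ℝ) (hws : wstar = A⁻¹.mulVec vstar) :
    (wstar ⬝ᵥ q) ^ 2 / (wstar ⬝ᵥ A.mulVec wstar) = vstar ⬝ᵥ A⁻¹.mulVec vstar ∧
    (∀ w : Fin n → ℝ, 0 ≤ w → w ≠ 0 →
      (w ⬝ᵥ q) ^ 2 / (w ⬝ᵥ A.mulVec w) ≤ (wstar ⬝ᵥ q) ^ 2 / (wstar ⬝ᵥ A.mulVec wstar)) := by
  have hBpd : A⁻¹.PosDef := hA.inv
  have hBh : (A⁻¹).IsHermitian := hBpd.1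
  have hdet : IsUnit A.det := isUnit_iff_ne_zero.mpr (ne_of_gt hA.det_pos)
  have hAinv : A * A⁻¹ = 1 := Matrix.mul_nonsing_inv A hdet
  have hinvA : A⁻¹ * A = 1 := Matrix.nonsing_inv_mul A hdet
  -- A *ᵥ wstar = vstar
  have hAw : A.mulVec wstar = vstar := by
    rw [hws, Matrix.mulVec_mulVec, hAinv, Matrix.one_mulVec]
  -- vstar ≠ 0
  have hvne : vstar ≠ 0 := by
    intro h
    apply hq0
    funext i
    have h1 : q i ≤ vstar i := hvs i
    have h2 : 0 ≤ q i := hq i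
    rw [h] at h1
    simp only [Pi.zero_apply] at h1 ⊢
    linarith
  set μ : ℝ := vstar ⬝ᵥ A⁻¹.mulVec vstar with hμ
  have hμpos : 0 < μ := by
    have := hBpd.dotProduct_mulVec_pos hvne
    simpa using this
  -- first order condition in direction d (feasible for all t ∈ (0,1])
  have hfoc : ∀ d : Fin n → ℝ, (∀ t : ℝ, 0 < t → t ≤ 1 → q ≤ vstar + t • d) →
      0 ≤ d ⬝ᵥ wstar := by
    intro d hfeas
    apply aux_first_order (c := d ⬝ᵥ A⁻¹.mulVec d)
    intro t ht0 ht1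
    have hmem := hmin (hfeas t ht0 ht1)
    simp only [Set.mem_setOf_eq] at hmem
    have hexp : (vstar + t • d) ⬝ᵥ A⁻¹.mulVec (vstar + t • d)
        = vstar ⬝ᵥ A⁻¹.mulVec vstar + 2 * (d ⬝ᵥ A⁻¹.mulVec vstar) * t
          + (d ⬝ᵥ A⁻¹.mulVec d) * t ^ 2 := by
      have hsym := aux_symm hBh vstar d
      simp only [Matrix.mulVec_add, Matrix.mulVec_smul, dotProduct_add,
        add_dotProduct, dotProduct_smul, smul_dotProduct,
        smul_eq_mul, hsym]
      ring
    rw [hexp] at hmem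
    rw [hws]
    linarith
  -- wstar ≥ 0
  have hwnn : ∀ i, 0 ≤ wstar i := by
    intro i
    have := hfoc (Pi.single i 1) (by
      intro t ht0 _
      intro j
      have := hvs j
      by_cases hij : j = i
      · subst hij
        simp only [Pi.add_apply, Pi.smul_apply, Pi.single_eq_same, smul_eq_mul, mul_one]
        linarith
      · simp only [Pi.add_apply, Pi.smul_apply, Pi.single_eq_of_ne hij, smul_eq_mul, mul_zero,
          add_zero]
        linarith)
    simpa [single_dotProduct] using this
  -- complementarity
  have hcomp : (q - vstar) ⬝ᵥ wstar = 0 := by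
    have h1 : 0 ≤ (q - vstar) ⬝ᵥ wstar := by
      apply hfoc
      intro t ht0 ht1 j
      simp only [Pi.add_apply, Pi.smul_apply, Pi.sub_apply, smul_eq_mul]
      have h2 := hvs j
      nlinarith
    have h2 : (q - vstar) ⬝ᵥ wstar ≤ 0 := by
      apply Finset.sum_nonpos
      intro i _
      have := hvs i
      have := hwnn i
      simp only [Pi.sub_apply]
      nlinarith
    linarith
  have hwq : wstar ⬝ᵥ q = μ := by
    have hwv : wstar ⬝ᵥ vstar = μ := by
      rw [hws, hμ, Matrix.dotProduct_mulVec, ← Matrix.mulVec_transpose]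
      congr 1
      have hBt : (A⁻¹)ᵀ = A⁻¹ := by
        have := hBh
        rwa [Matrix.IsHermitian, Matrix.conjTranspose_eq_transpose_of_trivial] at this
      rw [hBt]
    have : q ⬝ᵥ wstar - vstar ⬝ᵥ wstar = 0 := by
      rw [← sub_dotProduct]; exact hcomp
    rw [dotProduct_comm] at hwv ⊢
    linarith [hwv, this]
  have hwAw : wstar ⬝ᵥ A.mulVec wstar = μ := by
    rw [hAw, hws, hμ, dotProduct_comm, aux_symm hBh]
  have hrhs : μ ^ 2 / μ = μ := by
    rw [sq, mul_div_assoc, div_self hμpos.ne', mul_one]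
  constructor
  · rw [hwq, hwAw, hrhs]
  · intro w hw hwne
    rw [hwq, hwAw, hrhs]
    have haw : 0 < w ⬝ᵥ A.mulVec w := by
      have := hA.dotProduct_mulVec_pos hwne
      simpa using this
    rw [div_le_iff₀ haw]
    -- w ⬝ᵥ q ≤ w ⬝ᵥ vstar, both nonneg
    have h1 : 0 ≤ w ⬝ᵥ q := Finset.sum_nonneg fun i _ => mul_nonneg (hw i) (hq i)
    have h2 : w ⬝ᵥ q ≤ w ⬝ᵥ vstar := by
      apply Finset.sum_le_sum
      intro i _
      exact mul_le_mul_of_nonneg_left (hvs i) (hw i)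
    -- Cauchy-Schwarz: (w ⬝ᵥ vstar)^2 ≤ (w ⬝ᵥ A w) * μ
    have hcs := aux_cs hBpd.posSemidef (A.mulVec w) vstar
    have e1 : (A.mulVec w) ⬝ᵥ A⁻¹.mulVec vstar = w ⬝ᵥ vstar := by
      rw [aux_symm hBh, Matrix.mulVec_mulVec, hinvA, Matrix.one_mulVec,
        dotProduct_comm]
    have e2 : (A.mulVec w) ⬝ᵥ A⁻¹.mulVec (A.mulVec w) = w ⬝ᵥ A.mulVec w := by
      rw [Matrix.mulVec_mulVec, hinvA, Matrix.one_mulVec, dotProduct_comm,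
        aux_symm hA.1]
    rw [e1, e2, ← hμ] at hcs
    nlinarith
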